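/- Let N, M be positive natural numbers, A21 a real M × N matrix such that Q = A21·A21ᵀ is invertible, and fix x_d* ∈ ℝ^N and x_nd* ∈ ℝ^M; set v₁ = x_nd* − (1/2)·A21·x_d* and C* = (1/2)·x_d* + A21ᵀ·Q⁻¹·v₁. Define the trajectory x : ℝ → ℝ^N by x(t) = (3x_d* − 6C*)·t² + (6C* − 2x_d*)·t. Then x(0) = 0, x(1) = x_d*, A21 · (∫₀¹ x(τ) dτ) = x_nd*, and ∫₀¹ ‖x'(t)‖² dt = 12·⟨v₁, Q⁻¹·v₁⟩ + ⟨x_d*, x_d*⟩. Hence the minimum control energy 12·v₁ᵀQ⁻¹v₁ + x_d*ᵀx_d* is attained. -/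

import Mathlib

open Matrix

/-- **The minimum control energy is attained by the quadratic trajectory.**
With `Q = A21·A21ᵀ` invertible, `v₁ = x_nd* − (1/2)A21 x_d*`,
`C* = (1/2)x_d* + A21ᵀ Q⁻¹ v₁`, the trajectory
`x(t) = (3x_d* − 6C*)t² + (6C* − 2x_d*)t` satisfies `x(0) = 0`, `x(1) = x_d*`,
`A21 ∫₀¹ x = x_nd*`, and has energy `∫₀¹ ‖x'(t)‖² dt = 12⟨v₁, Q⁻¹v₁⟩ + ⟨x_d*, x_d*⟩`. -/
theorem control_energy_attained
    (N M : ℕ) (hN : 0 < N) (hM : 0 < M)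
    (A21 : Matrix (Fin M) (Fin N) ℝ)
    (Q : Matrix (Fin M) (Fin M) ℝ) (hQ : Q = A21 * A21ᵀ) (hQinv : IsUnit Q)
    (xds : Fin N → ℝ) (xnds : Fin M → ℝ)
    (v₁ : Fin M → ℝ) (hv₁ : v₁ = xnds - (1 / 2 : ℝ) • A21.mulVec xds)
    (Cstar : Fin N → ℝ)
    (hCstar : Cstar = (1 / 2 : ℝ) • xds + (A21ᵀ).mulVec (Q⁻¹.mulVec v₁))
    (x : ℝ → Fin N → ℝ)
    (hx : ∀ t, x t = t ^ 2 • ((3 : ℝ) • xds - (6 : ℝ) • Cstar) +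
      t • ((6 : ℝ) • Cstar - (2 : ℝ) • xds)) :
    x 0 = 0 ∧ x 1 = xds ∧
      A21.mulVec (∫ τ in (0:ℝ)..1, x τ) = xnds ∧
      (∫ t in (0:ℝ)..1, (deriv x t) ⬝ᵥ (deriv x t)) =
        12 * (v₁ ⬝ᵥ Q⁻¹.mulVec v₁) + xds ⬝ᵥ xds := by
  set a : Fin N → ℝ := (3 : ℝ) • xds - (6 : ℝ) • Cstar with ha
  set b : Fin N → ℝ := (6 : ℝ) • Cstar - (2 : ℝ) • xds with hb
  set w : Fin M → ℝ := Q⁻¹.mulVec v₁ with hw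
  set d : Fin N → ℝ := A21ᵀ.mulVec w with hd
  have hdet : IsUnit Q.det := (Matrix.isUnit_iff_isUnit_det Q).mp hQinv
  have hQw : Q.mulVec w = v₁ := by
    rw [hw, Matrix.mulVec_mulVec, Matrix.mul_nonsing_inv Q hdet, Matrix.one_mulVec]
  have hdC : Cstar = (1/2 : ℝ) • xds + d := by rw [hCstar]
  -- x(0) = 0
  have h0 : x 0 = 0 := by rw [hx]; simp
  -- x(1) = xds
  have h1 : x 1 = xds := by rw [hx]; funext i; simp [ha, hb]; ring
  refine ⟨h0, h1, ?_, ?_⟩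
  · -- integral condition
    have hint : (∫ τ in (0:ℝ)..1, x τ) = Cstar := by
      have : (∫ τ in (0:ℝ)..1, x τ) = (∫ τ in (0:ℝ)..1, τ ^ 2 • a + τ • b) := by
        apply intervalIntegral.integral_congr; intro t _; exact hx t
      rw [this, intervalIntegral.integral_add
        ((by fun_prop : Continuous fun τ : ℝ => τ ^ 2 • a).intervalIntegrable 0 1)
        ((by fun_prop : Continuous fun τ : ℝ => τ • b).intervalIntegrable 0 1)]
      rw [intervalIntegral.integral_smul_const, intervalIntegral.integral_smul_const]
      rw [integral_pow]
      have : (∫ τ in (0:ℝ)..1, τ) = (1/2 : ℝ) := by simp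
      rw [this]
      funext i
      simp [ha, hb]
      ring
    rw [hint, hdC, Matrix.mulVec_add, Matrix.mulVec_smul, hd, Matrix.mulVec_mulVec,
      ← hQ, hQw, hv₁]
    funext i; simp
  · -- energy
    have hderiv : ∀ t : ℝ, deriv x t = (2 * t) • a + b := by
      intro t
      have h1 : HasDerivAt (fun s : ℝ => s ^ 2 • a) ((2 * t) • a) t := by
        have := (hasDerivAt_pow 2 t).smul_const a
        simpa using this
      have h2 : HasDerivAt (fun s : ℝ => s • b) ((1 : ℝ) • b) t :=
        (hasDerivAt_id t).smul_const b
      have h := h1.add h2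
      simp only [one_smul] at h
      rw [show x = fun s : ℝ => s ^ 2 • a + s • b from funext hx]
      exact h.deriv
    have key : ∀ t : ℝ, (deriv x t) ⬝ᵥ (deriv x t) =
        4 * (a ⬝ᵥ a) * t ^ 2 + 4 * (a ⬝ᵥ b) * t + b ⬝ᵥ b := by
      intro t
      rw [hderiv]
      simp only [add_dotProduct, dotProduct_add, smul_dotProduct,
        dotProduct_smul, smul_eq_mul, dotProduct_comm b a]
      ring
    have hI : (∫ t in (0:ℝ)..1, (deriv x t) ⬝ᵥ (deriv x t)) =
        4 * (a ⬝ᵥ a) / 3 + 4 * (a ⬝ᵥ b) / 2 + b ⬝ᵥ b := by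
      rw [intervalIntegral.integral_congr (fun t _ => key t)]
      rw [intervalIntegral.integral_add (f := fun t : ℝ => 4 * (a ⬝ᵥ a) * t ^ 2 + 4 * (a ⬝ᵥ b) * t)
        ((((by fun_prop : Continuous fun t : ℝ => 4 * (a ⬝ᵥ a) * t ^ 2).add
          (by fun_prop : Continuous fun t : ℝ => 4 * (a ⬝ᵥ b) * t))).intervalIntegrable 0 1)
        (continuous_const.intervalIntegrable 0 1),
        intervalIntegral.integral_add
        ((by fun_prop : Continuous fun t : ℝ => 4 * (a ⬝ᵥ a) * t ^ 2).intervalIntegrable 0 1)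
        ((by fun_prop : Continuous fun t : ℝ => 4 * (a ⬝ᵥ b) * t).intervalIntegrable 0 1),
        intervalIntegral.integral_const_mul, intervalIntegral.integral_const_mul,
        integral_pow]
      have h2 : (∫ t in (0:ℝ)..1, t) = (1/2 : ℝ) := by simp
      rw [h2]
      simp
      ring
    -- a = -6d, b = 6d + xds
    have had : a = (-6 : ℝ) • d := by
      rw [ha, hdC]; funext i; simp; ring
    have hbd : b = (6 : ℝ) • d + xds := by
      rw [hb, hdC]; funext i; simp; ring
    have hdd : d ⬝ᵥ d = v₁ ⬝ᵥ Q⁻¹.mulVec v₁ := by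
      have h1 : (A21ᵀ.mulVec w) ⬝ᵥ (A21ᵀ.mulVec w) = v₁ ⬝ᵥ w := by
        rw [Matrix.dotProduct_mulVec, Matrix.vecMul_transpose, Matrix.mulVec_mulVec,
          ← hQ, hQw]
      rw [hd, h1, hw]
    rw [hI, had, hbd]
    simp only [add_dotProduct, dotProduct_add, smul_dotProduct,
      dotProduct_smul, smul_eq_mul, dotProduct_comm xds d, hdd]
    ring
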